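/- For any odd integer a > 1, the continued fraction expansion of √(a²+4) is periodic with period (( a−1)/2, 1, 1, (a−1)/2, 2a) and integer part a. -/
import Mathlib


/-- The sequence of partial quotients of the continued fraction expansion of a real number:
`cfDigit x 0 = ⌊x⌋` and subsequent digits are obtained by iterating the Gauss map. -/
noncomputable def cfDigit (x : ℝ) : ℕ → ℤ
  | 0 => ⌊x⌋
  | n + 1 => cfDigit (x - ⌊x⌋)⁻¹ n

lemma cfDigit_zero (x : ℝ) : cfDigit x 0 = ⌊x⌋ := rfl

lemma cfDigit_succ (x : ℝ) (n : ℕ) : cfDigit x (n + 1) = cfDigit (x - ⌊x⌋)⁻¹ n := rfl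

lemma gauss_step (x y : ℝ) (k : ℤ) (hk : ⌊x⌋ = k) (h : (x - k) * y = 1) :
    (x - (⌊x⌋ : ℝ))⁻¹ = y := by
  rw [hk]; exact inv_eq_of_mul_eq_one_right h

/-- For any odd integer `a > 1`, the continued fraction expansion of `√(a²+4)` is
`(a; (a-1)/2, 1, 1, (a-1)/2, 2a)` with the indicated part repeating periodically. -/
theorem cfrac_sqrt_sq_add_four (a : ℤ) (ha : Odd a) (ha1 : 1 < a) (N : ℤ) (hN : N = a ^ 2 + 4) :
    cfDigit (Real.sqrt N) 0 = a ∧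
    ∀ n : ℕ,
      cfDigit (Real.sqrt N) (5 * n + 1) = (a - 1) / 2 ∧
      cfDigit (Real.sqrt N) (5 * n + 2) = 1 ∧
      cfDigit (Real.sqrt N) (5 * n + 3) = 1 ∧
      cfDigit (Real.sqrt N) (5 * n + 4) = (a - 1) / 2 ∧
      cfDigit (Real.sqrt N) (5 * n + 5) = 2 * a := by
  obtain ⟨b, hb⟩ := ha
  have hb1 : 1 ≤ b := by omega
  have ha3 : 3 ≤ a := by omega
  have hdiv : (a - 1) / 2 = b := by omega
  set s : ℝ := Real.sqrt N with hs
  have hN0 : (0 : ℝ) ≤ (N : ℝ) := by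
    have : 0 ≤ N := by nlinarith
    exact_mod_cast this
  have hs0 : 0 ≤ s := Real.sqrt_nonneg _
  have hs2 : s ^ 2 = (a : ℝ) ^ 2 + 4 := by
    rw [hs, Real.sq_sqrt hN0]
    rw [hN]; push_cast; ring
  have haR : (3 : ℝ) ≤ (a : ℝ) := by exact_mod_cast ha3
  have hbR : (b : ℝ) = ((a : ℝ) - 1) / 2 := by
    have : (a : ℝ) = 2 * (b : ℝ) + 1 := by exact_mod_cast hb
    linarith
  have ha0 : (0 : ℝ) < (a : ℝ) := by linarith
  have ha0' : (a : ℝ) ≠ 0 := ne_of_gt ha0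
  have hslb : (a : ℝ) < s := by nlinarith
  have hsub : s < (a : ℝ) + 1 := by nlinarith
  -- the orbit of the Gauss map
  set x1 : ℝ := (s + a) / 4 with hx1
  set x2 : ℝ := (s + a - 2) / a with hx2
  set x3 : ℝ := (s + 2) / a with hx3
  set x4 : ℝ := (s + a - 2) / 4 with hx4
  set x5 : ℝ := s + a with hx5
  -- floors
  have f0 : ⌊s⌋ = a := by
    rw [Int.floor_eq_iff]
    constructor
    · linarith
    · push_cast; linarith
  have f1 : ⌊x1⌋ = b := by
    rw [Int.floor_eq_iff]
    constructor
    · rw [hbR, hx1]; linarith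
    · rw [hx1]; push_cast [hbR]; linarith
  have f2 : ⌊x2⌋ = 1 := by
    rw [Int.floor_eq_iff]
    constructor
    · rw [hx2]; rw [show ((1:ℤ):ℝ) = 1 by norm_num, le_div_iff₀ ha0]; linarith
    · rw [hx2]; push_cast; rw [div_lt_iff₀ ha0]; linarith
  have f3 : ⌊x3⌋ = 1 := by
    rw [Int.floor_eq_iff]
    constructor
    · rw [hx3]; rw [show ((1:ℤ):ℝ) = 1 by norm_num, le_div_iff₀ ha0]; linarith
    · rw [hx3]; push_cast; rw [div_lt_iff₀ ha0]; linarith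
  have f4 : ⌊x4⌋ = b := by
    rw [Int.floor_eq_iff]
    constructor
    · rw [hbR, hx4]; linarith
    · rw [hx4]; push_cast [hbR]; linarith
  have f5 : ⌊x5⌋ = 2 * a := by
    rw [Int.floor_eq_iff]
    constructor
    · push_cast; rw [hx5]; linarith
    · push_cast; rw [hx5]; linarith
  -- Gauss map steps
  have g0 : (s - (⌊s⌋ : ℝ))⁻¹ = x1 := by
    apply gauss_step _ _ _ f0
    rw [hx1]; field_simp; linear_combination hs2
  have g1 : (x1 - (⌊x1⌋ : ℝ))⁻¹ = x2 := by
    apply gauss_step _ _ _ f1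
    rw [hx1, hx2, hbR]; field_simp; linear_combination (2 : ℝ) * hs2
  have g2 : (x2 - (⌊x2⌋ : ℝ))⁻¹ = x3 := by
    apply gauss_step _ _ _ f2
    rw [hx2, hx3]; push_cast; field_simp; ring_nf; linear_combination hs2
  have g3 : (x3 - (⌊x3⌋ : ℝ))⁻¹ = x4 := by
    apply gauss_step _ _ _ f3
    rw [hx3, hx4]; push_cast; field_simp; linear_combination hs2
  have g4 : (x4 - (⌊x4⌋ : ℝ))⁻¹ = x5 := by
    apply gauss_step _ _ _ f4
    rw [hx4, hx5, hbR]; field_simp; linear_combination (2 : ℝ) * hs2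
  have g5 : (x5 - (⌊x5⌋ : ℝ))⁻¹ = x1 := by
    apply gauss_step _ _ _ f5
    rw [hx5, hx1]; push_cast; field_simp; linear_combination hs2
  -- periodicity of the digits of x1
  have hper : ∀ m : ℕ, cfDigit x1 (m + 5) = cfDigit x1 m := by
    intro m
    calc cfDigit x1 (m + 5) = cfDigit x2 (m + 4) := by
          rw [show m + 5 = (m + 4) + 1 from rfl, cfDigit_succ, g1]
      _ = cfDigit x3 (m + 3) := by rw [cfDigit_succ, g2]
      _ = cfDigit x4 (m + 2) := by rw [cfDigit_succ, g3]
      _ = cfDigit x5 (m + 1) := by rw [cfDigit_succ, g4]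
      _ = cfDigit x1 m := by rw [cfDigit_succ, g5]
  have hper5 : ∀ (n k : ℕ), cfDigit x1 (5 * n + k) = cfDigit x1 k := by
    intro n k
    induction n with
    | zero => simp
    | succ n ih =>
        rw [show 5 * (n + 1) + k = (5 * n + k) + 5 by ring, hper, ih]
  have hsx1 : ∀ m : ℕ, cfDigit s (m + 1) = cfDigit x1 m := by
    intro m; rw [cfDigit_succ, g0]
  -- base digit values
  have d0 : cfDigit x1 0 = b := by rw [cfDigit_zero, f1]
  have d1 : cfDigit x1 1 = 1 := by rw [cfDigit_succ, g1, cfDigit_zero, f2]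
  have d2 : cfDigit x1 2 = 1 := by
    rw [show (2:ℕ) = 1 + 1 from rfl, cfDigit_succ, g1, cfDigit_succ, g2, cfDigit_zero, f3]
  have d3 : cfDigit x1 3 = b := by
    rw [show (3:ℕ) = 2 + 1 from rfl, cfDigit_succ, g1, cfDigit_succ, g2, cfDigit_succ, g3,
      cfDigit_zero, f4]
  have d4 : cfDigit x1 4 = 2 * a := by
    rw [show (4:ℕ) = 3 + 1 from rfl, cfDigit_succ, g1, cfDigit_succ, g2, cfDigit_succ, g3,
      cfDigit_succ, g4, cfDigit_zero, f5]
  refine ⟨by rw [cfDigit_zero, f0], fun n => ?_⟩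
  rw [hdiv]
  refine ⟨?_, ?_, ?_, ?_, ?_⟩
  · rw [hsx1 (5 * n), show 5 * n = 5 * n + 0 from rfl, hper5, d0]
  · rw [show 5 * n + 2 = (5 * n + 1) + 1 from rfl, hsx1, hper5, d1]
  · rw [show 5 * n + 3 = (5 * n + 2) + 1 from rfl, hsx1, hper5, d2]
  · rw [show 5 * n + 4 = (5 * n + 3) + 1 from rfl, hsx1, hper5, d3]
  · rw [show 5 * n + 5 = (5 * n + 4) + 1 from rfl, hsx1, hper5, d4]
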